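/- Let a be a Hermitian operator on H^(1)⊗…⊗H^(k) with Tr(a ϱ) ≥ 0 for every separable state ϱ, let p = ⊗ᵢ|e₁^(i)⟩⟨e₁^(i)| be a pure product state with Tr(a p) = 0, let |e₂^(1)⟩ be a unit vector orthogonal to |e₁^(1)⟩, and let W = span{|e₁^(1)⟩,|e₂^(1)⟩} ⊗ ⊗_{i≥2} span{|e₁^(i)⟩}. Then the orthogonal projection a_W of a onto the Hermitian operators supported on W is either 0 or of the form λ |e₂^(1)⟩⟨e₂^(1)| ⊗ ⊗_{i=2}^{k}|e₁^(i)⟩⟨e₁^(i)| with λ > 0; in either case a_W is orthogonal (in the trace inner product) to σ₁(12) ⊗ ⊗_{i≥2}|e₁^(i)⟩⟨e₁^(i)| and to σ₂(12) ⊗ ⊗_{i≥2}|e₁^(i)⟩⟨e₁^(i)|, where σ₁(12), σ₂(12) act on span{|e₁^(1)⟩,|e₂^(1)⟩} as the Pauli matrices σ₁, σ₂ in the basis {|e₁^(1)⟩,|e₂^(1)⟩}. -/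

import Mathlib

open Matrix
open scoped ComplexOrder

namespace EWitness

/-- Operators on the tensor product `H⁽¹⁾ ⊗ ⋯ ⊗ H⁽ᵏ⁾` of finite-dimensional complex
Hilbert spaces (with `dim H⁽ⁱ⁾ = n i`), modeled as matrices indexed by tuples. -/
abbrev Op {k : ℕ} (n : Fin k → ℕ) := Matrix (∀ i, Fin (n i)) (∀ i, Fin (n i)) ℂ

/-- Tensor (Kronecker) product of one operator per tensor factor. -/
def tensorOp {k : ℕ} (n : Fin k → ℕ) (A : ∀ i, Matrix (Fin (n i)) (Fin (n i)) ℂ) : Op n :=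
  Matrix.of fun x y => ∏ i, A i (x i) (y i)

/-- Tensor product of one vector per tensor factor. -/
def tensorVec {k : ℕ} (n : Fin k → ℕ) (v : ∀ i, Fin (n i) → ℂ) : (∀ i, Fin (n i)) → ℂ :=
  fun x => ∏ i, v i (x i)

/-- The rank one projector `|v⟩⟨v|`. -/
def proj {m : Type*} (v : m → ℂ) : Matrix m m ℂ := Matrix.vecMulVec v (star v)

/-- The trace inner product `(a,b) = Tr(a† b)` (its real part; on the real vector space of
Hermitian operators this is exactly the trace inner product, which is real-valued there). -/
noncomputable def tinner {m : Type*} [Fintype m] (a b : Matrix m m ℂ) : ℝ :=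
  ((aᴴ * b).trace).re

/-- A state: a positive semidefinite trace-one operator. -/
noncomputable def IsState {m : Type*} [Fintype m] (ρ : Matrix m m ℂ) : Prop :=
  ρ.PosSemidef ∧ ρ.trace = 1

/-- A pure product state `⊗ᵢ |e⁽ⁱ⁾⟩⟨e⁽ⁱ⁾|` with the `e⁽ⁱ⁾` unit vectors. -/
def IsPureProduct {k : ℕ} (n : Fin k → ℕ) (p : Op n) : Prop :=
  ∃ e : ∀ i, Fin (n i) → ℂ,
    (∀ i, star (e i) ⬝ᵥ e i = 1) ∧ p = tensorOp n fun i => proj (e i)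

/-- A separable state: a finite convex combination of tensor products of states. -/
noncomputable def IsSeparable {k : ℕ} (n : Fin k → ℕ) (ϱ : Op n) : Prop :=
  ∃ (N : ℕ) (w : Fin N → ℝ) (ρ : Fin N → ∀ i, Matrix (Fin (n i)) (Fin (n i)) ℂ),
    (∀ j, 0 ≤ w j) ∧ ((∑ j, w j) = 1) ∧ (∀ j i, IsState (ρ j i)) ∧
    ϱ = ∑ j, (w j : ℂ) • tensorOp n (ρ j)

/-- The generating set of `τ⁽ⁱ⁾`: operators `I ⊗ ⋯ ⊗ h⁽ⁱ⁾ ⊗ ⋯ ⊗ I`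
with `h⁽ⁱ⁾` Hermitian and traceless. -/
def tauGen {k : ℕ} (n : Fin k → ℕ) (i : Fin k) : Set (Op n) :=
  {T | ∃ h : Matrix (Fin (n i)) (Fin (n i)) ℂ, h.IsHermitian ∧ h.trace = 0 ∧
      T = tensorOp n (Function.update (fun j => (1 : Matrix (Fin (n j)) (Fin (n j)) ℂ)) i h)}

/-- `τ⁽ⁱ⁾`: the real span of operators `I ⊗ ⋯ ⊗ h⁽ⁱ⁾ ⊗ ⋯ ⊗ I`. -/
noncomputable def tauComp {k : ℕ} (n : Fin k → ℕ) (i : Fin k) : Submodule ℝ (Op n) :=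
  Submodule.span ℝ (tauGen n i)

/-- `τ = span(⋃ᵢ τ⁽ⁱ⁾)`. -/
noncomputable def tau {k : ℕ} (n : Fin k → ℕ) : Submodule ℝ (Op n) :=
  Submodule.span ℝ (⋃ i, tauGen n i)

/-- The separable tangent space `C(p) = {i[p,t] : t ∈ τ}`. -/
def sepTangent {k : ℕ} (n : Fin k → ℕ) (p : Op n) : Set (Op n) :=
  {x | ∃ t ∈ tau n, x = Complex.I • (p * t - t * p)}

/-- Condition (★): for every pure product state `p` orthogonal to `a`, the separable tangent
space `C(p)` is contained in the hyperplane `I_a = {x : (x,a) = 0}`. -/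
def StarCond {k : ℕ} (n : Fin k → ℕ) (a : Op n) : Prop :=
  ∀ p : Op n, IsPureProduct n p → tinner a p = 0 →
    sepTangent n p ⊆ {x : Op n | tinner x a = 0}

/-- An operator is supported on a subspace `W` if it vanishes on the orthogonal
complement of `W` and its range is contained in `W`. -/
def SupportedOn {m : Type*} [Fintype m] (W : Submodule ℂ (m → ℂ)) (M : Matrix m m ℂ) : Prop :=
  (∀ v, M.mulVec v ∈ W) ∧ (∀ v, (∀ w ∈ W, star w ⬝ᵥ v = 0) → M.mulVec v = 0)


section Aux
variable {k : ℕ} [NeZero k] {n : Fin k → ℕ}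

lemma tensorVec_dot (v v' : ∀ i, Fin (n i) → ℂ) :
    star (tensorVec n v) ⬝ᵥ tensorVec n v' = ∏ i, star (v i) ⬝ᵥ v' i := by
  classical
  simp only [dotProduct, tensorVec, Pi.star_apply, star_prod, ← Finset.prod_mul_distrib]
  rw [← Fintype.piFinset_univ]
  exact (Finset.prod_univ_sum (fun i => (Finset.univ : Finset (Fin (n i)))) (fun i j => star (v i j) * v' i j)).symm

lemma tensorOp_vecMulVec (v v' : ∀ i, Fin (n i) → ℂ) :
    tensorOp n (fun i => vecMulVec (v i) (star (v' i)))
      = vecMulVec (tensorVec n v) (star (tensorVec n v')) := by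
  ext x y
  simp [tensorOp, tensorVec, vecMulVec_apply, Finset.prod_mul_distrib, star_prod]

lemma prod_split (h : Fin k → ℂ) :
    ∏ i, h i = h 0 * ∏ i ∈ Finset.univ.erase 0, h i :=
  (Finset.mul_prod_erase _ _ (Finset.mem_univ 0)).symm

lemma tensorVec_update_apply (v : ∀ i, Fin (n i) → ℂ) (x : Fin (n 0) → ℂ)
    (z : ∀ i, Fin (n i)) :
    tensorVec n (Function.update v 0 x) z
      = x (z 0) * ∏ i ∈ Finset.univ.erase 0, v i (z i) := by
  classical
  rw [tensorVec, prod_split]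
  simp only [Function.update_self]
  congr 1
  exact Finset.prod_congr rfl fun i hi => by
    rw [Function.update_of_ne (Finset.mem_erase.mp hi).1]

lemma tensorOp_update_apply (F : ∀ i, Matrix (Fin (n i)) (Fin (n i)) ℂ)
    (A : Matrix (Fin (n 0)) (Fin (n 0)) ℂ) (x y : ∀ i, Fin (n i)) :
    tensorOp n (Function.update F 0 A) x y
      = A (x 0) (y 0) * ∏ i ∈ Finset.univ.erase 0, F i (x i) (y i) := by
  classical
  show (∏ i, (Function.update F 0 A) i (x i) (y i)) = _
  rw [prod_split]
  simp only [Function.update_self]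
  congr 1
  exact Finset.prod_congr rfl fun i hi => by
    rw [Function.update_of_ne (Finset.mem_erase.mp hi).1]

lemma tensorVec_update_add (v : ∀ i, Fin (n i) → ℂ) (x y : Fin (n 0) → ℂ) :
    tensorVec n (Function.update v 0 (x + y))
      = tensorVec n (Function.update v 0 x) + tensorVec n (Function.update v 0 y) := by
  funext z; simp [tensorVec_update_apply, add_mul]

lemma tensorVec_update_smul (v : ∀ i, Fin (n i) → ℂ) (c : ℂ) (x : Fin (n 0) → ℂ) :
    tensorVec n (Function.update v 0 (c • x))
      = c • tensorVec n (Function.update v 0 x) := by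
  funext z; simp [tensorVec_update_apply, mul_assoc]

lemma tensorOp_update_add (F : ∀ i, Matrix (Fin (n i)) (Fin (n i)) ℂ)
    (A B : Matrix (Fin (n 0)) (Fin (n 0)) ℂ) :
    tensorOp n (Function.update F 0 (A + B))
      = tensorOp n (Function.update F 0 A) + tensorOp n (Function.update F 0 B) := by
  ext x y; simp [tensorOp_update_apply, add_mul]

lemma tensorOp_update_sub (F : ∀ i, Matrix (Fin (n i)) (Fin (n i)) ℂ)
    (A B : Matrix (Fin (n 0)) (Fin (n 0)) ℂ) :
    tensorOp n (Function.update F 0 (A - B))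
      = tensorOp n (Function.update F 0 A) - tensorOp n (Function.update F 0 B) := by
  ext x y; simp [tensorOp_update_apply, sub_mul]

lemma tensorOp_update_smul (F : ∀ i, Matrix (Fin (n i)) (Fin (n i)) ℂ)
    (c : ℂ) (A : Matrix (Fin (n 0)) (Fin (n 0)) ℂ) :
    tensorOp n (Function.update F 0 (c • A))
      = c • tensorOp n (Function.update F 0 A) := by
  ext x y; simp [tensorOp_update_apply, mul_assoc]

end Aux

section Mat
variable {m : Type*} [Fintype m]

lemma trace_mul_vecMulVec (M : Matrix m m ℂ) (x y : m → ℂ) :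
    (M * vecMulVec x (star y)).trace = star y ⬝ᵥ M *ᵥ x := by
  simp only [Matrix.trace, Matrix.diag_apply, Matrix.mul_apply, vecMulVec_apply,
    dotProduct, Matrix.mulVec, Finset.mul_sum, Pi.star_apply]
  exact Finset.sum_congr rfl fun i _ => Finset.sum_congr rfl fun j _ => by ring

lemma conj_dot (M : Matrix m m ℂ) (x y : m → ℂ) :
    (starRingEnd ℂ) (star x ⬝ᵥ M *ᵥ y) = star y ⬝ᵥ Mᴴ *ᵥ x := by
  simp only [dotProduct, Matrix.mulVec, Matrix.conjTranspose_apply, Finset.mul_sum,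
    map_sum, Pi.star_apply, Complex.star_def]
  rw [Finset.sum_comm]
  exact Finset.sum_congr rfl fun i _ => Finset.sum_congr rfl fun j _ => by
    simp only [_root_.map_mul, Complex.conj_conj]; ring

lemma vecMulVec_mulVec' (x y v : m → ℂ) :
    vecMulVec x (star y) *ᵥ v = (star y ⬝ᵥ v) • x := by
  funext i
  simp only [Matrix.mulVec, dotProduct, vecMulVec_apply, Pi.smul_apply, smul_eq_mul,
    Finset.sum_mul, Pi.star_apply]
  exact Finset.sum_congr rfl fun j _ => by ring

lemma vecMulVec_conjT (x y : m → ℂ) :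
    (vecMulVec x (star y))ᴴ = vecMulVec y (star x) := by
  ext i j
  simp [vecMulVec_apply, Matrix.conjTranspose_apply, mul_comm]

end Mat


section Mat2
variable {m : Type*} [Fintype m]

lemma tinner_vecMulVec (M : Matrix m m ℂ) (hM : M.IsHermitian) (x y : m → ℂ) :
    tinner M (vecMulVec x (star y)) = (star y ⬝ᵥ M *ᵥ x).re := by
  rw [tinner, hM.eq, trace_mul_vecMulVec]

lemma tinner_smul_vecMulVec (M : Matrix m m ℂ) (hM : M.IsHermitian) (c : ℂ) (x y : m → ℂ) :
    tinner M (c • vecMulVec x (star y)) = (c * (star y ⬝ᵥ M *ᵥ x)).re := by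
  rw [tinner, hM.eq, Matrix.mul_smul, Matrix.trace_smul, smul_eq_mul, trace_mul_vecMulVec]

lemma tinner_proj (M : Matrix m m ℂ) (hM : M.IsHermitian) (v : m → ℂ) :
    tinner M (proj v) = (star v ⬝ᵥ M *ᵥ v).re := tinner_vecMulVec M hM v v

lemma tinner_sub_left (a b x : Matrix m m ℂ) : tinner (a - b) x = tinner a x - tinner b x := by
  simp [tinner, Matrix.conjTranspose_sub, Matrix.sub_mul, Complex.sub_re]

lemma tinner_add_right (a x y : Matrix m m ℂ) :
    tinner a (x + y) = tinner a x + tinner a y := by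
  simp [tinner, Matrix.mul_add, Complex.add_re]

lemma tinner_sub_right (a x y : Matrix m m ℂ) :
    tinner a (x - y) = tinner a x - tinner a y := by
  simp [tinner, Matrix.mul_sub, Complex.sub_re]

lemma tinner_real_smul (r : ℝ) (a x : Matrix m m ℂ) :
    tinner a ((r : ℂ) • x) = r * tinner a x := by
  simp [tinner, Matrix.mul_smul, Matrix.trace_smul, smul_eq_mul, Complex.re_ofReal_mul]

lemma isState_proj (v : m → ℂ) (hv : star v ⬝ᵥ v = 1) : IsState (proj v) := by
  constructor
  · refine Matrix.PosSemidef.of_dotProduct_mulVec_nonneg ?_ ?_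
    · exact vecMulVec_conjT v v
    · intro x
      have hsx : star x ⬝ᵥ v = star (star v ⬝ᵥ x) := star_dotProduct x v
      have h1 : star x ⬝ᵥ (proj v *ᵥ x) = (star v ⬝ᵥ x) * star (star v ⬝ᵥ x) := by
        rw [proj, vecMulVec_mulVec', dotProduct_smul, smul_eq_mul, hsx]
      rw [h1]
      exact mul_star_self_nonneg _
  · rw [proj]
    have : (vecMulVec v (star v)).trace = star v ⬝ᵥ v := by
      simp [Matrix.trace, Matrix.diag, vecMulVec_apply, dotProduct, mul_comm]
    rw [this, hv]

lemma isState_scaled_proj (v : m → ℂ) {s : ℝ} (hs : 0 < s) (hv : star v ⬝ᵥ v = (s : ℂ)) :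
    IsState (((s⁻¹ : ℝ) : ℂ) • proj v) := by
  refine ⟨Matrix.PosSemidef.of_dotProduct_mulVec_nonneg ?_ ?_, ?_⟩
  · show (((s⁻¹ : ℝ) : ℂ) • proj v)ᴴ = ((s⁻¹ : ℝ) : ℂ) • proj v
    rw [Matrix.conjTranspose_smul, proj, vecMulVec_conjT]
    simp [Complex.star_def, Complex.conj_ofReal]
  · intro x
    have hsx : star x ⬝ᵥ v = star (star v ⬝ᵥ x) := star_dotProduct x v
    have h1 : star x ⬝ᵥ ((((s⁻¹ : ℝ) : ℂ) • proj v) *ᵥ x)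
        = ((s⁻¹ : ℝ) : ℂ) * ((star v ⬝ᵥ x) * star (star v ⬝ᵥ x)) := by
      rw [Matrix.smul_mulVec, proj, vecMulVec_mulVec', dotProduct_smul, dotProduct_smul,
        smul_eq_mul, smul_eq_mul, hsx]
    rw [h1]
    exact mul_nonneg (Complex.zero_le_real.mpr (by positivity)) (mul_star_self_nonneg _)
  · rw [Matrix.trace_smul, proj]
    have : (vecMulVec v (star v)).trace = star v ⬝ᵥ v := by
      simp [Matrix.trace, Matrix.diag, vecMulVec_apply, dotProduct, mul_comm]
    rw [this, hv, smul_eq_mul]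
    rw [← Complex.ofReal_mul]
    rw [inv_mul_cancel₀ (ne_of_gt hs)]
    norm_num

lemma supportedOn_vecMulVec {W : Submodule ℂ (m → ℂ)} {x y : m → ℂ}
    (hx : x ∈ W) (hy : y ∈ W) : SupportedOn W (vecMulVec x (star y)) := by
  constructor
  · intro v; rw [vecMulVec_mulVec']; exact W.smul_mem _ hx
  · intro v hv; rw [vecMulVec_mulVec', hv y hy, zero_smul]

lemma supportedOn_add {W : Submodule ℂ (m → ℂ)} {M N : Matrix m m ℂ}
    (hM : SupportedOn W M) (hN : SupportedOn W N) : SupportedOn W (M + N) := by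
  constructor
  · intro v; rw [Matrix.add_mulVec]; exact W.add_mem (hM.1 v) (hN.1 v)
  · intro v hv; rw [Matrix.add_mulVec, hM.2 v hv, hN.2 v hv, add_zero]

lemma supportedOn_sub {W : Submodule ℂ (m → ℂ)} {M N : Matrix m m ℂ}
    (hM : SupportedOn W M) (hN : SupportedOn W N) : SupportedOn W (M - N) := by
  constructor
  · intro v; rw [Matrix.sub_mulVec]; exact W.sub_mem (hM.1 v) (hN.1 v)
  · intro v hv; rw [Matrix.sub_mulVec, hM.2 v hv, hN.2 v hv, sub_zero]

lemma supportedOn_smul {W : Submodule ℂ (m → ℂ)} {M : Matrix m m ℂ} (c : ℂ)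
    (hM : SupportedOn W M) : SupportedOn W (c • M) := by
  constructor
  · intro v; rw [Matrix.smul_mulVec]; exact W.smul_mem c (hM.1 v)
  · intro v hv; rw [Matrix.smul_mulVec, hM.2 v hv, smul_zero]

end Mat2

lemma quad_zero {A B : ℝ} (hB : 0 ≤ B) (h : ∀ t : ℝ, 0 ≤ t * A + t ^ 2 * B) : A = 0 := by
  by_contra hA
  have hB1 : (0 : ℝ) < B + 1 := by linarith
  have hA2 : 0 < A ^ 2 := by positivity
  have hs : 0 < (B + 1)⁻¹ := inv_pos.mpr hB1
  have key : (-(A * (B + 1)⁻¹)) * A + (-(A * (B + 1)⁻¹)) ^ 2 * B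
      = A ^ 2 * (B + 1)⁻¹ * ((B + 1)⁻¹ * B - 1) := by ring
  have hlt : (B + 1)⁻¹ * B - 1 < 0 := by
    have h2 : B / (B + 1) < 1 := (div_lt_one hB1).mpr (by linarith)
    rw [div_eq_inv_mul] at h2
    linarith
  have h3 := h (-(A * (B + 1)⁻¹))
  rw [key] at h3
  nlinarith [mul_pos hA2 hs]


/-- Let `a` be Hermitian and nonnegative on separable states, let
`p = ⊗ᵢ|e₁⁽ⁱ⁾⟩⟨e₁⁽ⁱ⁾|` be a pure product state with `Tr(a p) = 0`, let `|e₂⟩ ⊥ |e₁⁽¹⁾⟩`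
be a unit vector and `W = span{|e₁⁽¹⁾⟩,|e₂⟩} ⊗ ⊗ᵢ span{|e₁⁽ⁱ⁾⟩}`.  Then the orthogonal
projection `a_W` of `a` onto the Hermitian operators supported on `W` is either `0` or
`λ |e₂⟩⟨e₂| ⊗ ⊗ᵢ|e₁⁽ⁱ⁾⟩⟨e₁⁽ⁱ⁾|` with `λ > 0`; in either case `a_W` is orthogonal to
`σ₁(12) ⊗ ⊗ᵢ|e₁⁽ⁱ⁾⟩⟨e₁⁽ⁱ⁾|` and `σ₂(12) ⊗ ⊗ᵢ|e₁⁽ⁱ⁾⟩⟨e₁⁽ⁱ⁾|`, where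
`σ₁(12) = |e₁⟩⟨e₂| + |e₂⟩⟨e₁|` and `σ₂(12) = −i|e₁⟩⟨e₂| + i|e₂⟩⟨e₁|` act as the Pauli
matrices on `span{|e₁⁽¹⁾⟩,|e₂⟩}` in the basis `{|e₁⁽¹⁾⟩,|e₂⟩}`. -/
theorem projection_of_witness_on_qubit_slice {k : ℕ} [NeZero k] (n : Fin k → ℕ)
    (a : Op n) (ha : a.IsHermitian)
    (hpos : ∀ ϱ : Op n, IsSeparable n ϱ → 0 ≤ tinner a ϱ)
    (e : ∀ i, Fin (n i) → ℂ) (he : ∀ i, star (e i) ⬝ᵥ e i = 1)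
    (hzero : tinner a (tensorOp n fun i => proj (e i)) = 0)
    (e₂ : Fin (n 0) → ℂ) (he₂ : star e₂ ⬝ᵥ e₂ = 1) (horth : star (e 0) ⬝ᵥ e₂ = 0)
    (aW : Op n) (haW : aW.IsHermitian)
    (haWsupp : SupportedOn (Submodule.span ℂ
      {tensorVec n e, tensorVec n (Function.update e 0 e₂)}) aW)
    (haWproj : ∀ x : Op n, x.IsHermitian →
      SupportedOn (Submodule.span ℂ
        {tensorVec n e, tensorVec n (Function.update e 0 e₂)}) x →
      tinner (a - aW) x = 0) :
    (aW = 0 ∨ ∃ lam : ℝ, 0 < lam ∧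
        aW = (lam : ℂ) • tensorOp n (Function.update (fun i => proj (e i)) 0 (proj e₂))) ∧
    tinner aW (tensorOp n (Function.update (fun i => proj (e i)) 0
        (vecMulVec (e 0) (star e₂) + vecMulVec e₂ (star (e 0))))) = 0 ∧
    tinner aW (tensorOp n (Function.update (fun i => proj (e i)) 0
        (Complex.I • vecMulVec e₂ (star (e 0))
          - Complex.I • vecMulVec (e 0) (star e₂)))) = 0 := by
  classical
  set u : (∀ i, Fin (n i)) → ℂ := tensorVec n e with hu_def
  set w : (∀ i, Fin (n i)) → ℂ := tensorVec n (Function.update e 0 e₂) with hw_def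
  set W : Submodule ℂ ((∀ i, Fin (n i)) → ℂ) := Submodule.span ℂ {u, w} with hW_def
  have huW : u ∈ W := Submodule.subset_span (Set.mem_insert _ _)
  have hwW : w ∈ W := Submodule.subset_span (Set.mem_insert_of_mem _ rfl)
  have horth' : star e₂ ⬝ᵥ e 0 = 0 := by
    rw [star_dotProduct, horth, star_zero]
  have hee : ∀ i, star (Function.update e 0 e₂ i) ⬝ᵥ Function.update e 0 e₂ i = 1 := by
    intro i
    rcases eq_or_ne i 0 with h | h
    · subst h; simpa using he₂
    · rw [Function.update_of_ne h]; exact he i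
  have huu : star u ⬝ᵥ u = 1 := by
    rw [hu_def, tensorVec_dot]; exact Finset.prod_eq_one fun i _ => he i
  have hww : star w ⬝ᵥ w = 1 := by
    rw [hw_def, tensorVec_dot]; exact Finset.prod_eq_one fun i _ => hee i
  have huw : star u ⬝ᵥ w = 0 := by
    rw [hu_def, hw_def, tensorVec_dot]
    apply Finset.prod_eq_zero (Finset.mem_univ 0)
    simpa using horth
  have hwu : star w ⬝ᵥ u = 0 := by
    rw [hu_def, hw_def, tensorVec_dot]
    apply Finset.prod_eq_zero (Finset.mem_univ 0)
    simpa using horth'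
  -- tensor operator identifications
  have hproj_u : tensorOp n (fun i => proj (e i)) = proj u := tensorOp_vecMulVec e e
  have hupd_proj : Function.update (fun i => proj (e i)) 0 (proj e₂)
      = fun i => proj (Function.update e 0 e₂ i) := by
    funext i
    rcases eq_or_ne i 0 with h | h
    · subst h; simp
    · rw [Function.update_of_ne h, Function.update_of_ne h]
  have hproj_w : tensorOp n (Function.update (fun i => proj (e i)) 0 (proj e₂)) = proj w := by
    rw [hupd_proj]
    exact tensorOp_vecMulVec _ _
  have hvw : tensorOp n (Function.update (fun i => proj (e i)) 0 (vecMulVec (e 0) (star e₂)))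
      = vecMulVec u (star w) := by
    have h1 : Function.update (fun i => proj (e i)) 0 (vecMulVec (e 0) (star e₂))
        = fun i => vecMulVec (e i) (star (Function.update e 0 e₂ i)) := by
      funext i
      rcases eq_or_ne i 0 with h | h
      · subst h; simp
      · rw [Function.update_of_ne h, Function.update_of_ne h]; rfl
    rw [h1]
    exact tensorOp_vecMulVec _ _
  have hwv : tensorOp n (Function.update (fun i => proj (e i)) 0 (vecMulVec e₂ (star (e 0))))
      = vecMulVec w (star u) := by
    have h1 : Function.update (fun i => proj (e i)) 0 (vecMulVec e₂ (star (e 0)))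
        = fun i => vecMulVec (Function.update e 0 e₂ i) (star (e i)) := by
      funext i
      rcases eq_or_ne i 0 with h | h
      · subst h; simp
      · rw [Function.update_of_ne h, Function.update_of_ne h]; rfl
    rw [h1]
    exact tensorOp_vecMulVec _ _
  have hsig1 : tensorOp n (Function.update (fun i => proj (e i)) 0
        (vecMulVec (e 0) (star e₂) + vecMulVec e₂ (star (e 0))))
      = vecMulVec u (star w) + vecMulVec w (star u) := by
    rw [tensorOp_update_add, hvw, hwv]
  have hsig2 : tensorOp n (Function.update (fun i => proj (e i)) 0
        (Complex.I • vecMulVec e₂ (star (e 0)) - Complex.I • vecMulVec (e 0) (star e₂)))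
      = Complex.I • vecMulVec w (star u) - Complex.I • vecMulVec u (star w) := by
    rw [tensorOp_update_sub, tensorOp_update_smul, tensorOp_update_smul, hvw, hwv]
  -- positivity on the slice
  have pos_slice : ∀ (x : Fin (n 0) → ℂ) (s : ℝ), 0 < s → star x ⬝ᵥ x = (s : ℂ) →
      0 ≤ (star (tensorVec n (Function.update e 0 x)) ⬝ᵥ
        a *ᵥ tensorVec n (Function.update e 0 x)).re := by
    intro x s hs hx
    have hstate : ∀ i, IsState
        (Function.update (fun i => proj (e i)) 0 (((s⁻¹ : ℝ) : ℂ) • proj x) i) := by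
      intro i
      rcases eq_or_ne i 0 with h | h
      · subst h
        simp only [Function.update_self]
        exact isState_scaled_proj x hs hx
      · rw [Function.update_of_ne h]
        exact isState_proj (e i) (he i)
    have hsep : IsSeparable n (tensorOp n
        (Function.update (fun i => proj (e i)) 0 (((s⁻¹ : ℝ) : ℂ) • proj x))) := by
      refine ⟨1, fun _ => 1, fun _ =>
        Function.update (fun i => proj (e i)) 0 (((s⁻¹ : ℝ) : ℂ) • proj x),
        fun _ => zero_le_one, by simp, fun _ => hstate, ?_⟩
      simp
    have h0 := hpos _ hsep
    have hupd : Function.update (fun i => proj (e i)) 0 (proj x)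
        = fun i => vecMulVec (Function.update e 0 x i) (star (Function.update e 0 x i)) := by
      funext i
      rcases eq_or_ne i 0 with h | h
      · subst h; simp; rfl
      · rw [Function.update_of_ne h, Function.update_of_ne h]; rfl
    have heq : tensorOp n (Function.update (fun i => proj (e i)) 0 (((s⁻¹ : ℝ) : ℂ) • proj x))
        = ((s⁻¹ : ℝ) : ℂ) • proj (tensorVec n (Function.update e 0 x)) := by
      rw [tensorOp_update_smul]
      congr 1
      rw [hupd]
      exact tensorOp_vecMulVec _ _
    rw [heq, tinner_real_smul] at h0
    have hsinv : (0 : ℝ) < s⁻¹ := inv_pos.mpr hs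
    have h2 : 0 ≤ tinner a (proj (tensorVec n (Function.update e 0 x))) := by nlinarith
    rwa [tinner_proj a ha] at h2
  have hB : 0 ≤ (star w ⬝ᵥ a *ᵥ w).re := by
    have := pos_slice e₂ 1 one_pos (by rw [he₂]; norm_num)
    rwa [← hw_def] at this
  have hre0 : (star u ⬝ᵥ a *ᵥ u).re = 0 := by
    have h1 : tinner a (tensorOp n fun i => proj (e i)) = (star u ⬝ᵥ a *ᵥ u).re := by
      rw [hproj_u]; exact tinner_vecMulVec a ha u u
    rw [← h1, hzero]
  -- the key annihilation of cross terms
  have hA : ∀ c : ℂ, (starRingEnd ℂ) c * c = 1 →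
      (c * (star u ⬝ᵥ a *ᵥ w)).re + ((starRingEnd ℂ) c * (star w ⬝ᵥ a *ᵥ u)).re = 0 := by
    intro c hc
    apply quad_zero hB
    intro t
    have hx : star (e 0 + ((t : ℂ) * c) • e₂) ⬝ᵥ (e 0 + ((t : ℂ) * c) • e₂)
        = ((1 + t ^ 2 : ℝ) : ℂ) := by
      have hexp : star (e 0 + ((t : ℂ) * c) • e₂) ⬝ᵥ (e 0 + ((t : ℂ) * c) • e₂)
          = star (e 0) ⬝ᵥ e 0 + ((t : ℂ) * c) * (star (e 0) ⬝ᵥ e₂)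
            + (starRingEnd ℂ) ((t : ℂ) * c) * (star e₂ ⬝ᵥ e 0)
            + ((starRingEnd ℂ) ((t : ℂ) * c) * ((t : ℂ) * c)) * (star e₂ ⬝ᵥ e₂) := by
        simp only [star_add, star_smul, add_dotProduct, dotProduct_add, smul_dotProduct,
          dotProduct_smul, smul_eq_mul, Complex.star_def]
        ring_nf
      rw [hexp, he 0, he₂, horth, horth']
      have hcc : (starRingEnd ℂ) ((t : ℂ) * c) * ((t : ℂ) * c)
          = ((t : ℂ) ^ 2) * ((starRingEnd ℂ) c * c) := by
        simp only [_root_.map_mul, Complex.conj_ofReal]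
        ring
      rw [hcc, hc]
      push_cast
      ring
    have hpos1 := pos_slice (e 0 + ((t : ℂ) * c) • e₂) (1 + t ^ 2) (by positivity) hx
    have hV : tensorVec n (Function.update e 0 (e 0 + ((t : ℂ) * c) • e₂))
        = u + ((t : ℂ) * c) • w := by
      rw [tensorVec_update_add, tensorVec_update_smul, Function.update_eq_self, ← hu_def,
        ← hw_def]
    rw [hV] at hpos1
    have hexp2 : star (u + ((t : ℂ) * c) • w) ⬝ᵥ a *ᵥ (u + ((t : ℂ) * c) • w)
        = (star u ⬝ᵥ a *ᵥ u) + (t : ℂ) * (c * (star u ⬝ᵥ a *ᵥ w))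
          + (t : ℂ) * ((starRingEnd ℂ) c * (star w ⬝ᵥ a *ᵥ u))
          + ((t : ℂ) ^ 2 * ((starRingEnd ℂ) c * c)) * (star w ⬝ᵥ a *ᵥ w) := by
      simp only [star_add, star_smul, add_dotProduct, smul_dotProduct, mulVec_add,
        mulVec_smul, dotProduct_add, dotProduct_smul, smul_eq_mul, Complex.star_def,
        _root_.map_mul, Complex.conj_ofReal]
      ring
    rw [hexp2, hc, mul_one] at hpos1
    have ht2 : ((t : ℂ) ^ 2) = (((t ^ 2 : ℝ)) : ℂ) := by push_cast; ring
    rw [ht2] at hpos1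
    simp only [Complex.add_re, Complex.re_ofReal_mul, hre0] at hpos1
    linarith
  have hA1 := hA 1 (by simp)
  have hA2 := hA Complex.I (by simp)
  -- Hermiticity and support of the relevant operators
  have hherm_pu : (proj u).IsHermitian := vecMulVec_conjT u u
  have hherm_pw : (proj w).IsHermitian := vecMulVec_conjT w w
  have hherm_s1 : (vecMulVec u (star w) + vecMulVec w (star u)).IsHermitian := by
    show _ᴴ = _
    rw [Matrix.conjTranspose_add, vecMulVec_conjT, vecMulVec_conjT, add_comm]
  have hherm_s2 : (Complex.I • vecMulVec w (star u)
      - Complex.I • vecMulVec u (star w)).IsHermitian := by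
    show _ᴴ = _
    rw [Matrix.conjTranspose_sub, Matrix.conjTranspose_smul, Matrix.conjTranspose_smul,
      vecMulVec_conjT, vecMulVec_conjT]
    simp only [Complex.star_def, Complex.conj_I]
    ext i j
    simp only [Matrix.sub_apply, Matrix.smul_apply, smul_eq_mul, vecMulVec_apply]
    ring
  have hsupp_pu : SupportedOn W (proj u) := supportedOn_vecMulVec huW huW
  have hsupp_pw : SupportedOn W (proj w) := supportedOn_vecMulVec hwW hwW
  have hsupp_s1 : SupportedOn W (vecMulVec u (star w) + vecMulVec w (star u)) :=
    supportedOn_add (supportedOn_vecMulVec huW hwW) (supportedOn_vecMulVec hwW huW)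
  have hsupp_s2 : SupportedOn W (Complex.I • vecMulVec w (star u)
      - Complex.I • vecMulVec u (star w)) :=
    supportedOn_sub (supportedOn_smul _ (supportedOn_vecMulVec hwW huW))
      (supportedOn_smul _ (supportedOn_vecMulVec huW hwW))
  -- projection identities
  have hproj1 : tinner aW (proj u) = 0 := by
    have h := haWproj (proj u) hherm_pu hsupp_pu
    rw [tinner_sub_left] at h
    have h2 : tinner a (proj u) = 0 := by rw [← hproj_u]; exact hzero
    linarith
  have hprojs1 : tinner aW (vecMulVec u (star w) + vecMulVec w (star u)) = 0 := by
    have h := haWproj _ hherm_s1 hsupp_s1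
    rw [tinner_sub_left] at h
    have h2 : tinner a (vecMulVec u (star w) + vecMulVec w (star u)) = 0 := by
      rw [tinner_add_right, tinner_vecMulVec a ha, tinner_vecMulVec a ha]
      have : (1 * (star u ⬝ᵥ a *ᵥ w)).re + ((starRingEnd ℂ) 1 * (star w ⬝ᵥ a *ᵥ u)).re = 0 :=
        hA1
      simp only [one_mul, _root_.map_one] at this
      linarith
    linarith
  have hprojs2 : tinner aW (Complex.I • vecMulVec w (star u)
      - Complex.I • vecMulVec u (star w)) = 0 := by
    have h := haWproj _ hherm_s2 hsupp_s2
    rw [tinner_sub_left] at h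
    have h2 : tinner a (Complex.I • vecMulVec w (star u)
        - Complex.I • vecMulVec u (star w)) = 0 := by
      rw [tinner_sub_right, tinner_smul_vecMulVec a ha, tinner_smul_vecMulVec a ha]
      have : (Complex.I * (star u ⬝ᵥ a *ᵥ w)).re
          + ((starRingEnd ℂ) Complex.I * (star w ⬝ᵥ a *ᵥ u)).re = 0 := hA2
      simp only [Complex.conj_I, neg_mul, Complex.neg_re] at this
      linarith
    linarith
  have hprojw : tinner aW (proj w) = tinner a (proj w) := by
    have h := haWproj (proj w) hherm_pw hsupp_pw
    rw [tinner_sub_left] at h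
    linarith
  -- matrix elements of aW
  have hαre : (star u ⬝ᵥ aW *ᵥ u).re = 0 := by
    rw [tinner_proj aW haW u] at hproj1
    exact hproj1
  have hα : star u ⬝ᵥ aW *ᵥ u = 0 := by
    have hconj : (starRingEnd ℂ) (star u ⬝ᵥ aW *ᵥ u) = star u ⬝ᵥ aW *ᵥ u := by
      rw [conj_dot, haW.eq]
    have him : (star u ⬝ᵥ aW *ᵥ u).im = 0 := by
      have := Complex.conj_eq_iff_im.mp hconj
      exact this
    exact Complex.ext hαre him
  have hββ' : (starRingEnd ℂ) (star u ⬝ᵥ aW *ᵥ w) = star w ⬝ᵥ aW *ᵥ u := by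
    rw [conj_dot, haW.eq]
  have hβre : (star u ⬝ᵥ aW *ᵥ w).re = 0 := by
    rw [tinner_add_right, tinner_vecMulVec aW haW, tinner_vecMulVec aW haW] at hprojs1
    have h1 : (star w ⬝ᵥ aW *ᵥ u).re = (star u ⬝ᵥ aW *ᵥ w).re := by
      rw [← hββ']; exact (Complex.conj_re _)
    linarith
  have hβim : (star u ⬝ᵥ aW *ᵥ w).im = 0 := by
    rw [tinner_sub_right, tinner_smul_vecMulVec aW haW, tinner_smul_vecMulVec aW haW]
      at hprojs2
    have h1 : (Complex.I * (star u ⬝ᵥ aW *ᵥ w)).re = -(star u ⬝ᵥ aW *ᵥ w).im := by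
      simp [Complex.mul_re]
    have h2 : (Complex.I * (star w ⬝ᵥ aW *ᵥ u)).re = -(star w ⬝ᵥ aW *ᵥ u).im := by
      simp [Complex.mul_re]
    have h3 : (star w ⬝ᵥ aW *ᵥ u).im = -(star u ⬝ᵥ aW *ᵥ w).im := by
      rw [← hββ']; exact (Complex.conj_im _)
    rw [h1, h2, h3] at hprojs2
    linarith
  have hβ : star u ⬝ᵥ aW *ᵥ w = 0 := Complex.ext hβre hβim
  have hβ' : star w ⬝ᵥ aW *ᵥ u = 0 := by rw [← hββ', hβ, map_zero]
  have hγconj : (starRingEnd ℂ) (star w ⬝ᵥ aW *ᵥ w) = star w ⬝ᵥ aW *ᵥ w := by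
    rw [conj_dot, haW.eq]
  have hγ : star w ⬝ᵥ aW *ᵥ w = (((star w ⬝ᵥ aW *ᵥ w).re : ℝ) : ℂ) :=
    (Complex.conj_eq_iff_re.mp hγconj).symm
  set lam : ℝ := (star w ⬝ᵥ aW *ᵥ w).re with hlam_def
  have hlam_nonneg : 0 ≤ lam := by
    have h1 : tinner aW (proj w) = lam := tinner_proj aW haW w
    have h2 : tinner a (proj w) = (star w ⬝ᵥ a *ᵥ w).re := tinner_proj a ha w
    rw [h1, h2] at hprojw
    rw [hprojw]
    exact hB
  -- action of aW on basis vectors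
  have haWu : aW *ᵥ u = 0 := by
    obtain ⟨c, d, hcd⟩ := Submodule.mem_span_pair.mp (haWsupp.1 u)
    have hc : c = star u ⬝ᵥ aW *ᵥ u := by
      have := congrArg (fun z => star u ⬝ᵥ z) hcd
      simpa [dotProduct_add, dotProduct_smul, huu, huw, smul_eq_mul] using this
    have hd : d = star w ⬝ᵥ aW *ᵥ u := by
      have := congrArg (fun z => star w ⬝ᵥ z) hcd
      simpa [dotProduct_add, dotProduct_smul, hwu, hww, smul_eq_mul] using this
    rw [← hcd, hc, hd, hα, hβ', zero_smul, zero_smul, add_zero]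
  have haWw : aW *ᵥ w = ((lam : ℝ) : ℂ) • w := by
    obtain ⟨c, d, hcd⟩ := Submodule.mem_span_pair.mp (haWsupp.1 w)
    have hc : c = star u ⬝ᵥ aW *ᵥ w := by
      have := congrArg (fun z => star u ⬝ᵥ z) hcd
      simpa [dotProduct_add, dotProduct_smul, huu, huw, smul_eq_mul] using this
    have hd : d = star w ⬝ᵥ aW *ᵥ w := by
      have := congrArg (fun z => star w ⬝ᵥ z) hcd
      simpa [dotProduct_add, dotProduct_smul, hwu, hww, smul_eq_mul] using this
    rw [← hcd, hc, hd, hβ, zero_smul, zero_add, ← hγ]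
  -- full description of aW
  have hmain : aW = ((lam : ℝ) : ℂ) • proj w := by
    have hvec : ∀ v, aW *ᵥ v = (star w ⬝ᵥ v) • (((lam : ℝ) : ℂ) • w) := by
      intro v
      have hv' : aW *ᵥ (v - (star u ⬝ᵥ v) • u - (star w ⬝ᵥ v) • w) = 0 := by
        apply haWsupp.2
        intro z hz
        have hzu : star u ⬝ᵥ (v - (star u ⬝ᵥ v) • u - (star w ⬝ᵥ v) • w) = 0 := by
          simp [dotProduct_sub, dotProduct_smul, huu, huw, smul_eq_mul]
        have hzw : star w ⬝ᵥ (v - (star u ⬝ᵥ v) • u - (star w ⬝ᵥ v) • w) = 0 := by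
          simp [dotProduct_sub, dotProduct_smul, hwu, hww, smul_eq_mul]
        refine Submodule.span_induction ?_ ?_ ?_ ?_ hz
        · intro y hy
          rcases hy with rfl | hy
          · exact hzu
          · rw [Set.mem_singleton_iff] at hy; subst hy; exact hzw
        · simp
        · intro y z' _ _ hy hz'
          rw [star_add, add_dotProduct, hy, hz', add_zero]
        · intro c y _ hy
          rw [star_smul, smul_dotProduct, hy, smul_zero]
      have hid : v = (v - (star u ⬝ᵥ v) • u - (star w ⬝ᵥ v) • w)
          + (star u ⬝ᵥ v) • u + (star w ⬝ᵥ v) • w := by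
        funext z
        simp only [Pi.add_apply, Pi.sub_apply, Pi.smul_apply, smul_eq_mul]
        ring
      have hsplit : aW *ᵥ v
          = aW *ᵥ (v - (star u ⬝ᵥ v) • u - (star w ⬝ᵥ v) • w)
            + (star u ⬝ᵥ v) • (aW *ᵥ u) + (star w ⬝ᵥ v) • (aW *ᵥ w) := by
        conv_lhs => rw [hid]
        rw [mulVec_add, mulVec_add, mulVec_smul, mulVec_smul]
      rw [hsplit, hv', haWu, haWw, zero_add, smul_zero, zero_add]
    ext x y
    have hxy := congrFun (hvec (Pi.single y 1)) x
    rw [mulVec_single_one] at hxy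
    simp only [Matrix.col_apply, dotProduct_single, Pi.star_apply, mul_one, Pi.smul_apply, smul_eq_mul] at hxy
    rw [hxy]
    simp only [Matrix.smul_apply, proj, vecMulVec_apply, Pi.star_apply, smul_eq_mul]
    ring
  refine ⟨?_, ?_, ?_⟩
  · rcases eq_or_lt_of_le hlam_nonneg with h0 | hpos'
    · left
      rw [hmain, ← h0]
      simp
    · right
      exact ⟨lam, hpos', by rw [hmain, hproj_w]⟩
  · rw [hsig1]
    exact hprojs1
  · have hgoal : Complex.I • vecMulVec w (star u) - Complex.I • vecMulVec u (star w)
        = tensorOp n (Function.update (fun i => proj (e i)) 0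
          (Complex.I • vecMulVec e₂ (star (e 0)) - Complex.I • vecMulVec (e 0) (star e₂))) :=
      hsig2.symm
    rw [← hgoal]
    exact hprojs2


end EWitness
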